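/- The function h(l) = 4 l² ∫_0^∞ z² Φ(−l z √I / 2) φ(z) dz, defined for l > 0 with constant I > 0, tends to 0 as l → 0⁺ and as l → ∞, is continuous and positive on (0, ∞), and hence attains a maximum at some l* ∈ (0, ∞). -/

import Mathlib

open Real MeasureTheory Filter

/-- The standard normal density `φ`. -/
noncomputable def stdNormalPDF (u : ℝ) : ℝ :=
  (Real.sqrt (2 * Real.pi))⁻¹ * Real.exp (-u ^ 2 / 2)

/-- The standard normal CDF `Φ`. -/
noncomputable def stdNormalCDF (t : ℝ) : ℝ :=
  ∫ u in Set.Iic t, stdNormalPDF u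

/-- The ATMCMC diffusion speed `h(l) = 4 l² ∫₀^∞ z² Φ(−lz√I/2) φ(z) dz`. -/
noncomputable def atmcmcSpeed (I : ℝ) (l : ℝ) : ℝ :=
  4 * l ^ 2 * ∫ z in Set.Ioi (0 : ℝ),
    z ^ 2 * stdNormalCDF (-(l * z * Real.sqrt I) / 2) * stdNormalPDF z

lemma pdf_pos (u : ℝ) : 0 < stdNormalPDF u := by
  unfold stdNormalPDF
  positivity

lemma pdf_nonneg (u : ℝ) : 0 ≤ stdNormalPDF u := (pdf_pos u).le

lemma pdf_eq (u : ℝ) : stdNormalPDF u = (Real.sqrt (2 * Real.pi))⁻¹ * Real.exp (-(1/2) * u ^ 2) := by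
  unfold stdNormalPDF; ring_nf

lemma pdf_continuous : Continuous stdNormalPDF := by
  unfold stdNormalPDF
  continuity

lemma pdf_integrable : Integrable stdNormalPDF := by
  have h := (integrable_exp_neg_mul_sq (by norm_num : (0:ℝ) < 1/2)).const_mul (Real.sqrt (2 * Real.pi))⁻¹
  exact h.congr (Filter.Eventually.of_forall fun u => (pdf_eq u).symm)

lemma pdf_integral : ∫ u, stdNormalPDF u = 1 := by
  have : ∫ u, stdNormalPDF u = (Real.sqrt (2 * Real.pi))⁻¹ * ∫ u : ℝ, Real.exp (-(1/2) * u ^ 2) := by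
    rw [← integral_const_mul]
    congr 1; funext u; rw [pdf_eq]
  rw [this, integral_gaussian]
  rw [show π / (1/2) = 2 * π by ring]
  rw [inv_mul_cancel₀ (by positivity : Real.sqrt (2*π) ≠ 0)]

lemma cdf_nonneg (t : ℝ) : 0 ≤ stdNormalCDF t :=
  setIntegral_nonneg measurableSet_Iic fun u _ => pdf_nonneg u

lemma cdf_le_one (t : ℝ) : stdNormalCDF t ≤ 1 := by
  rw [← pdf_integral]
  exact setIntegral_le_integral pdf_integrable (Filter.Eventually.of_forall pdf_nonneg)

lemma cdf_pos (t : ℝ) : 0 < stdNormalCDF t := by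
  unfold stdNormalCDF
  rw [setIntegral_pos_iff_support_of_nonneg_ae
    (Filter.Eventually.of_forall fun u => pdf_nonneg u) pdf_integrable.integrableOn]
  have : Function.support stdNormalPDF = Set.univ := by
    ext u; simp [Function.mem_support, (pdf_pos u).ne']
  rw [this, Set.univ_inter]
  simp

lemma cdf_continuous : Continuous stdNormalCDF := by
  have key : ∀ t, stdNormalCDF t = stdNormalCDF 0 + ∫ u in (0:ℝ)..t, stdNormalPDF u := by
    intro t
    have := intervalIntegral.integral_Iic_sub_Iic (pdf_integrable.integrableOn (s := Set.Iic (0:ℝ)))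
      (pdf_integrable.integrableOn (s := Set.Iic t))
    unfold stdNormalCDF
    linarith [this]
  have : Continuous fun t => stdNormalCDF 0 + ∫ u in (0:ℝ)..t, stdNormalPDF u :=
    continuous_const.add (pdf_integrable.continuous_primitive 0)
  exact this.congr fun t => (key t).symm

lemma cdf_tail {a : ℝ} (ha : 0 ≤ a) : stdNormalCDF (-a) ≤ Real.exp (-a ^ 2 / 2) := by
  have hshift : Integrable (fun u : ℝ => stdNormalPDF (u + a)) := pdf_integrable.comp_add_right a
  have h1 : stdNormalCDF (-a) ≤ ∫ u in Set.Iic (-a), Real.exp (-a ^ 2 / 2) * stdNormalPDF (u + a) := by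
    apply setIntegral_mono_on pdf_integrable.integrableOn
      ((hshift.const_mul _).integrableOn) measurableSet_Iic
    intro u hu
    simp only [Set.mem_Iic] at hu
    unfold stdNormalPDF
    rw [← mul_assoc, mul_comm (Real.exp (-a^2/2)), mul_assoc, ← Real.exp_add]
    apply mul_le_mul_of_nonneg_left _ (by positivity)
    apply Real.exp_le_exp.mpr
    nlinarith [mul_nonneg ha (by linarith : 0 ≤ -(a + u))]
  have h2 : ∫ u in Set.Iic (-a), Real.exp (-a ^ 2 / 2) * stdNormalPDF (u + a)
      ≤ ∫ u : ℝ, Real.exp (-a ^ 2 / 2) * stdNormalPDF (u + a) :=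
    setIntegral_le_integral (hshift.const_mul _)
      (Filter.Eventually.of_forall fun u => mul_nonneg (Real.exp_nonneg _) (pdf_nonneg _))
  have h3 : ∫ u : ℝ, Real.exp (-a ^ 2 / 2) * stdNormalPDF (u + a) = Real.exp (-a ^ 2 / 2) := by
    rw [integral_const_mul, integral_add_right_eq_self stdNormalPDF a, pdf_integral, mul_one]
  linarith

lemma mul_exp_neg_le_one {t : ℝ} (_ht : 0 ≤ t) : t * Real.exp (-t) ≤ 1 := by
  have h1 : t ≤ Real.exp t := by linarith [Real.add_one_le_exp t]
  have h2 := mul_le_mul_of_nonneg_right h1 (Real.exp_nonneg (-t))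
  rwa [← Real.exp_add, add_neg_cancel, Real.exp_zero] at h2

lemma sq_mul_exp_le (z : ℝ) {b : ℝ} (hb : 0 < b) :
    z ^ 2 * Real.exp (-(2 * b) * z ^ 2) ≤ b⁻¹ * Real.exp (-b * z ^ 2) := by
  have h1 : (b * z ^ 2) * Real.exp (-(b * z ^ 2)) ≤ 1 := mul_exp_neg_le_one (by positivity)
  calc z ^ 2 * Real.exp (-(2 * b) * z ^ 2)
      = b⁻¹ * ((b * z ^ 2) * Real.exp (-(b * z ^ 2))) * Real.exp (-b * z ^ 2) := by
        rw [show (-(2 * b) * z ^ 2 : ℝ) = (-(b * z ^ 2)) + (-b * z ^ 2) by ring, Real.exp_add]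
        field_simp
    _ ≤ b⁻¹ * 1 * Real.exp (-b * z ^ 2) := by
        apply mul_le_mul_of_nonneg_right _ (Real.exp_nonneg _)
        exact mul_le_mul_of_nonneg_left h1 (by positivity)
    _ = b⁻¹ * Real.exp (-b * z ^ 2) := by ring

/-- The bound function `z² φ(z)` is integrable. -/
lemma bnd_integrable : Integrable (fun z : ℝ => z ^ 2 * stdNormalPDF z) := by
  have hint := (integrable_exp_neg_mul_sq (by norm_num : (0:ℝ) < 1/4)).const_mul
    ((4 : ℝ) * (Real.sqrt (2 * Real.pi))⁻¹)
  apply Integrable.mono' hint ((continuous_pow 2).mul pdf_continuous).aestronglyMeasurable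
  refine Filter.Eventually.of_forall fun z => ?_
  rw [Real.norm_eq_abs]
  show |z ^ 2 * stdNormalPDF z| ≤ _
  rw [abs_of_nonneg (mul_nonneg (sq_nonneg z) (pdf_nonneg z))]
  have h1 : z ^ 2 * Real.exp (-(2 * (1/4)) * z ^ 2) ≤ (1/4 : ℝ)⁻¹ * Real.exp (-(1/4) * z ^ 2) :=
    sq_mul_exp_le z (by norm_num)
  rw [pdf_eq]
  calc z ^ 2 * ((Real.sqrt (2 * Real.pi))⁻¹ * Real.exp (-(1/2) * z ^ 2))
      = (Real.sqrt (2 * Real.pi))⁻¹ * (z ^ 2 * Real.exp (-(2 * (1/4)) * z ^ 2)) := by norm_num; ring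
    _ ≤ (Real.sqrt (2 * Real.pi))⁻¹ * ((1/4 : ℝ)⁻¹ * Real.exp (-(1/4) * z ^ 2)) :=
        mul_le_mul_of_nonneg_left h1 (by positivity)
    _ = 4 * (Real.sqrt (2 * Real.pi))⁻¹ * Real.exp (-(1/4) * z ^ 2) := by norm_num; ring

/-- The integrand of the speed integral. -/
noncomputable def fInt (I l : ℝ) : ℝ :=
  ∫ z in Set.Ioi (0 : ℝ), z ^ 2 * stdNormalCDF (-(l * z * Real.sqrt I) / 2) * stdNormalPDF z

lemma speed_eq (I l : ℝ) : atmcmcSpeed I l = 4 * l ^ 2 * fInt I l := rfl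

lemma f_nonneg (I l z : ℝ) :
    0 ≤ z ^ 2 * stdNormalCDF (-(l * z * Real.sqrt I) / 2) * stdNormalPDF z :=
  mul_nonneg (mul_nonneg (sq_nonneg z) (cdf_nonneg _)) (pdf_nonneg z)

lemma f_cont_z (I l : ℝ) :
    Continuous (fun z => z ^ 2 * stdNormalCDF (-(l * z * Real.sqrt I) / 2) * stdNormalPDF z) := by
  apply Continuous.mul _ pdf_continuous
  apply Continuous.mul (by continuity)
  exact cdf_continuous.comp (by continuity)

lemma f_le_bnd (I l z : ℝ) :
    z ^ 2 * stdNormalCDF (-(l * z * Real.sqrt I) / 2) * stdNormalPDF z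
      ≤ z ^ 2 * stdNormalPDF z := by
  exact mul_le_mul_of_nonneg_right
    (mul_le_of_le_one_right (sq_nonneg z) (cdf_le_one _)) (pdf_nonneg z)

lemma f_integrableOn (I l : ℝ) :
    IntegrableOn (fun z => z ^ 2 * stdNormalCDF (-(l * z * Real.sqrt I) / 2) * stdNormalPDF z)
      (Set.Ioi (0:ℝ)) := by
  apply Integrable.mono' bnd_integrable.integrableOn
    (f_cont_z I l).aestronglyMeasurable.restrict
  refine Filter.Eventually.of_forall fun z => ?_
  rw [Real.norm_eq_abs, abs_of_nonneg (f_nonneg I l z)]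
  exact f_le_bnd I l z

lemma fInt_pos (I l : ℝ) : 0 < fInt I l := by
  unfold fInt
  rw [setIntegral_pos_iff_support_of_nonneg_ae
    (Filter.Eventually.of_forall fun z => f_nonneg I l z) (f_integrableOn I l)]
  have hsub : Set.Ioi (0:ℝ) ⊆ Function.support
      (fun z => z ^ 2 * stdNormalCDF (-(l * z * Real.sqrt I) / 2) * stdNormalPDF z) := by
    intro z hz
    have hz' : (0:ℝ) < z := hz
    exact ne_of_gt (mul_pos (mul_pos (by positivity) (cdf_pos _)) (pdf_pos z))
  have : volume (Function.support
      (fun z => z ^ 2 * stdNormalCDF (-(l * z * Real.sqrt I) / 2) * stdNormalPDF z)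
      ∩ Set.Ioi (0:ℝ)) = volume (Set.Ioi (0:ℝ)) := by
    rw [Set.inter_eq_self_of_subset_right hsub]
  rw [this]
  simp

lemma fInt_le (I l : ℝ) : fInt I l ≤ ∫ z in Set.Ioi (0:ℝ), z ^ 2 * stdNormalPDF z := by
  apply setIntegral_mono_on (f_integrableOn I l) bnd_integrable.integrableOn measurableSet_Ioi
  exact fun z _ => f_le_bnd I l z

lemma speed_nonneg (I l : ℝ) : 0 ≤ atmcmcSpeed I l := by
  rw [speed_eq]
  exact mul_nonneg (by positivity) (fInt_pos I l).le

lemma speed_pos (I : ℝ) {l : ℝ} (hl : 0 < l) : 0 < atmcmcSpeed I l := by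
  rw [speed_eq]
  exact mul_pos (by positivity) (fInt_pos I l)

lemma speed_le_atTop {I : ℝ} (hI : 0 < I) {l : ℝ} (hl : 0 < l) :
    atmcmcSpeed I l ≤ (64 / I * (Real.sqrt (2 * Real.pi))⁻¹ * Real.sqrt (16 * Real.pi / I)) / l := by
  set b : ℝ := l ^ 2 * I / 16 with hb_def
  have hb : 0 < b := by positivity
  -- pointwise bound on the integrand
  have hpt : ∀ z ∈ Set.Ioi (0:ℝ),
      z ^ 2 * stdNormalCDF (-(l * z * Real.sqrt I) / 2) * stdNormalPDF z
        ≤ (Real.sqrt (2 * Real.pi))⁻¹ * (b⁻¹ * Real.exp (-b * z ^ 2)) := by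
    intro z hz
    have hz' : (0:ℝ) < z := hz
    have ha : (0:ℝ) ≤ l * z * Real.sqrt I / 2 := by positivity
    have hcdf : stdNormalCDF (-(l * z * Real.sqrt I) / 2)
        ≤ Real.exp (-(2 * b) * z ^ 2) := by
      have h := cdf_tail ha
      rw [show -(l * z * Real.sqrt I / 2) = -(l * z * Real.sqrt I) / 2 by ring] at h
      refine h.trans (le_of_eq ?_)
      have hsq : Real.sqrt I ^ 2 = I := Real.sq_sqrt hI.le
      rw [hb_def, show (l * z * Real.sqrt I / 2) ^ 2 = l ^ 2 * z ^ 2 * I / 4 by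
        rw [div_pow, mul_pow, mul_pow, hsq]; norm_num]
      ring
    have hpdf : stdNormalPDF z ≤ (Real.sqrt (2 * Real.pi))⁻¹ := by
      unfold stdNormalPDF
      have : Real.exp (-z ^ 2 / 2) ≤ 1 := Real.exp_le_one_iff.mpr (by nlinarith [sq_nonneg z])
      calc (Real.sqrt (2 * Real.pi))⁻¹ * Real.exp (-z ^ 2 / 2)
          ≤ (Real.sqrt (2 * Real.pi))⁻¹ * 1 := mul_le_mul_of_nonneg_left this (by positivity)
        _ = (Real.sqrt (2 * Real.pi))⁻¹ := mul_one _
    calc z ^ 2 * stdNormalCDF (-(l * z * Real.sqrt I) / 2) * stdNormalPDF z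
        ≤ z ^ 2 * Real.exp (-(2 * b) * z ^ 2) * (Real.sqrt (2 * Real.pi))⁻¹ := by
          apply mul_le_mul (mul_le_mul_of_nonneg_left hcdf (sq_nonneg z)) hpdf (pdf_nonneg z)
          positivity
      _ ≤ b⁻¹ * Real.exp (-b * z ^ 2) * (Real.sqrt (2 * Real.pi))⁻¹ :=
          mul_le_mul_of_nonneg_right (sq_mul_exp_le z hb) (by positivity)
      _ = (Real.sqrt (2 * Real.pi))⁻¹ * (b⁻¹ * Real.exp (-b * z ^ 2)) := by ring
  -- integrate the bound
  have hGint : Integrable (fun z : ℝ =>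
      (Real.sqrt (2 * Real.pi))⁻¹ * (b⁻¹ * Real.exp (-b * z ^ 2))) :=
    ((integrable_exp_neg_mul_sq hb).const_mul b⁻¹).const_mul _
  have h1 : fInt I l ≤ ∫ z in Set.Ioi (0:ℝ),
      (Real.sqrt (2 * Real.pi))⁻¹ * (b⁻¹ * Real.exp (-b * z ^ 2)) :=
    setIntegral_mono_on (f_integrableOn I l) hGint.integrableOn measurableSet_Ioi hpt
  have h2 : (∫ z in Set.Ioi (0:ℝ),
      (Real.sqrt (2 * Real.pi))⁻¹ * (b⁻¹ * Real.exp (-b * z ^ 2)))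
      ≤ ∫ z : ℝ, (Real.sqrt (2 * Real.pi))⁻¹ * (b⁻¹ * Real.exp (-b * z ^ 2)) :=
    setIntegral_le_integral hGint (Filter.Eventually.of_forall fun z => by positivity)
  have h3 : (∫ z : ℝ, (Real.sqrt (2 * Real.pi))⁻¹ * (b⁻¹ * Real.exp (-b * z ^ 2)))
      = (Real.sqrt (2 * Real.pi))⁻¹ * (b⁻¹ * Real.sqrt (Real.pi / b)) := by
    rw [integral_const_mul, integral_const_mul, integral_gaussian]
  have hsqrt : Real.sqrt (Real.pi / b) = Real.sqrt (16 * Real.pi / I) * (1 / l) := by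
    rw [show Real.pi / b = (16 * Real.pi / I) * (1 / l) ^ 2 by
      rw [hb_def]; field_simp]
    rw [Real.sqrt_mul (by positivity), Real.sqrt_sq (by positivity)]
  have hfle : fInt I l ≤ (Real.sqrt (2 * Real.pi))⁻¹ * (b⁻¹ * Real.sqrt (Real.pi / b)) := by
    linarith
  rw [speed_eq]
  calc 4 * l ^ 2 * fInt I l
      ≤ 4 * l ^ 2 * ((Real.sqrt (2 * Real.pi))⁻¹ * (b⁻¹ * Real.sqrt (Real.pi / b))) :=
        mul_le_mul_of_nonneg_left hfle (by positivity)
    _ = (64 / I * (Real.sqrt (2 * Real.pi))⁻¹ * Real.sqrt (16 * Real.pi / I)) / l := by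
        rw [hsqrt, hb_def]; field_simp; ring

lemma speed_tendsto_zero (I : ℝ) :
    Tendsto (atmcmcSpeed I) (nhdsWithin 0 (Set.Ioi 0)) (nhds 0) := by
  set M : ℝ := ∫ z in Set.Ioi (0:ℝ), z ^ 2 * stdNormalPDF z with hM
  have hb : ∀ l : ℝ, atmcmcSpeed I l ≤ 4 * M * l ^ 2 := by
    intro l
    rw [speed_eq]
    calc 4 * l ^ 2 * fInt I l ≤ 4 * l ^ 2 * M :=
          mul_le_mul_of_nonneg_left (fInt_le I l) (by positivity)
      _ = 4 * M * l ^ 2 := by ring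
  have htend : Tendsto (fun l : ℝ => 4 * M * l ^ 2) (nhdsWithin 0 (Set.Ioi 0)) (nhds 0) := by
    have : Tendsto (fun l : ℝ => 4 * M * l ^ 2) (nhds 0) (nhds (4 * M * 0 ^ 2)) :=
      (continuous_const.mul (continuous_pow 2)).tendsto 0
    simpa using this.mono_left nhdsWithin_le_nhds
  exact squeeze_zero' (Filter.Eventually.of_forall fun l => speed_nonneg I l)
    (Filter.Eventually.of_forall hb) htend

lemma speed_tendsto_atTop {I : ℝ} (hI : 0 < I) :
    Tendsto (atmcmcSpeed I) atTop (nhds 0) := by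
  set K : ℝ := 64 / I * (Real.sqrt (2 * Real.pi))⁻¹ * Real.sqrt (16 * Real.pi / I) with hK
  have htend : Tendsto (fun l : ℝ => K / l) atTop (nhds 0) := by
    have h := Filter.Tendsto.const_mul K (tendsto_inv_atTop_zero (𝕜 := ℝ))
    simpa [div_eq_mul_inv] using h
  apply squeeze_zero' (Filter.Eventually.of_forall fun l => speed_nonneg I l)
    _ htend
  filter_upwards [eventually_gt_atTop (0:ℝ)] with l hl
  exact speed_le_atTop hI hl

lemma speed_continuousOn (I : ℝ) : ContinuousOn (atmcmcSpeed I) (Set.Ioi 0) := by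
  have hfInt : ContinuousOn (fInt I) (Set.Ioi (0:ℝ)) := by
    unfold fInt
    apply continuousOn_of_dominated
      (bound := fun z : ℝ => z ^ 2 * stdNormalPDF z)
    · exact fun l _ => (f_cont_z I l).aestronglyMeasurable.restrict
    · intro l _
      refine (ae_restrict_iff' measurableSet_Ioi).mpr (Filter.Eventually.of_forall fun z _ => ?_)
      rw [Real.norm_eq_abs, abs_of_nonneg (f_nonneg I l z)]
      exact f_le_bnd I l z
    · exact bnd_integrable.integrableOn
    · refine Filter.Eventually.of_forall fun z => ?_
      apply Continuous.continuousOn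
      apply Continuous.mul _ continuous_const
      exact continuous_const.mul (cdf_continuous.comp (by continuity))
  exact (continuous_const.mul (continuous_pow 2)).continuousOn.mul hfInt

/-- `h` tends to `0` as `l → 0⁺` and as `l → ∞`, is continuous and positive on `(0, ∞)`,
and attains a maximum at some `l* ∈ (0, ∞)`. -/
theorem atmcmc_diffusion_speed_properties (I : ℝ) (hI : 0 < I) :
    Tendsto (atmcmcSpeed I) (nhdsWithin 0 (Set.Ioi 0)) (nhds 0) ∧
    Tendsto (atmcmcSpeed I) atTop (nhds 0) ∧
    ContinuousOn (atmcmcSpeed I) (Set.Ioi 0) ∧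
    (∀ l : ℝ, 0 < l → 0 < atmcmcSpeed I l) ∧
    (∃ lstar : ℝ, 0 < lstar ∧ ∀ l : ℝ, 0 < l → atmcmcSpeed I l ≤ atmcmcSpeed I lstar) := by
  refine ⟨speed_tendsto_zero I, speed_tendsto_atTop hI, speed_continuousOn I,
    fun l hl => speed_pos I hl, ?_⟩
  set c : ℝ := atmcmcSpeed I 1 with hc
  have hcpos : 0 < c := speed_pos I one_pos
  -- near zero, eventually below c
  have h0 : ∀ᶠ l in nhdsWithin 0 (Set.Ioi 0), atmcmcSpeed I l < c :=
    (speed_tendsto_zero I).eventually_lt_const hcpos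
  have hT : ∀ᶠ l in atTop, atmcmcSpeed I l < c :=
    (speed_tendsto_atTop hI).eventually_lt_const hcpos
  obtain ⟨u, hu, hIoo⟩ := mem_nhdsGT_iff_exists_Ioo_subset.mp h0
  obtain ⟨B, hB⟩ := eventually_atTop.mp hT
  set lo : ℝ := min (u / 2) 1 with hlo_def
  set hi : ℝ := max B 1 with hhi_def
  have hu0 : (0:ℝ) < u := hu
  have hlo_pos : 0 < lo := by
    apply lt_min (by linarith) one_pos
  have hlo_le_one : lo ≤ 1 := min_le_right _ _
  have hone_le_hi : (1:ℝ) ≤ hi := le_max_right _ _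
  have hsub : Set.Icc lo hi ⊆ Set.Ioi 0 := fun x hx => lt_of_lt_of_le hlo_pos hx.1
  obtain ⟨lstar, hlstar_mem, hmax⟩ :=
    (isCompact_Icc (a := lo) (b := hi)).exists_isMaxOn
      (Set.nonempty_Icc.mpr (hlo_le_one.trans hone_le_hi))
      ((speed_continuousOn I).mono hsub)
  refine ⟨lstar, lt_of_lt_of_le hlo_pos hlstar_mem.1, fun l hl => ?_⟩
  have hc_le : c ≤ atmcmcSpeed I lstar :=
    hmax (Set.mem_Icc.mpr ⟨hlo_le_one, hone_le_hi⟩)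
  rcases le_or_gt l lo with hcase | hcase
  · rcases eq_or_lt_of_le hcase with rfl | hlt
    · exact hmax (Set.mem_Icc.mpr ⟨le_refl _, hlo_le_one.trans hone_le_hi⟩)
    · have : l ∈ Set.Ioo 0 u := ⟨hl, by
        have : lo ≤ u / 2 := min_le_left _ _
        linarith⟩
      exact le_of_lt (lt_of_lt_of_le (hIoo this) hc_le)
  · rcases le_or_gt l hi with hcase2 | hcase2
    · exact hmax (Set.mem_Icc.mpr ⟨hcase.le, hcase2⟩)
    · have : B ≤ l := le_trans (le_max_left _ _) hcase2.le
      exact le_of_lt (lt_of_lt_of_le (hB l this) hc_le)
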